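/- Homogeneous networks: let φ be an M×M real matrix that is symmetric, entrywise nonnegative, and row-stochastic (each row sums to 1), and let all infection rates be equal, β_j = β0 > 0 for every j, with recovery rate γ > 0. Then the next generation matrix is κ = (β0/γ)·φ·φᵀ; every eigenvalue λ of κ satisfies 0 ≤ λ ≤ β0/γ, and β0/γ is an eigenvalue of κ with eigenvector the all-ones vector. Consequently, all eigenvalues of κ are strictly less than 1 if and only if β0 < γ. -/

import Mathlib

open Matrix

/-- Next generation matrix `κ_{ik} = (1/γ)·Σ_j β_j φ_{ij} φ_{kj}`. -/
noncomputable def ngm (M : ℕ) (β : Fin M → ℝ) (γ : ℝ)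
    (φ : Matrix (Fin M) (Fin M) ℝ) : Matrix (Fin M) (Fin M) ℝ :=
  Matrix.of fun i k => (1 / γ) * ∑ j, β j * φ i j * φ k j

lemma matrix_mem_spectrum_iff {M : ℕ} (A : Matrix (Fin M) (Fin M) ℝ) (μ : ℝ) :
    μ ∈ spectrum ℝ A ↔ ∃ v, v ≠ 0 ∧ A *ᵥ v = μ • v := by
  rw [spectrum.mem_iff, Matrix.isUnit_iff_isUnit_det, isUnit_iff_ne_zero, not_ne_iff,
    ← Matrix.exists_mulVec_eq_zero_iff]
  refine exists_congr fun v => and_congr_right fun hv => ?_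
  rw [Matrix.sub_mulVec, sub_eq_zero, eq_comm]
  congr! 1
  ext i
  simp [Matrix.mulVec, diagonal_dotProduct, Matrix.algebraMap_eq_diagonal]

/-- Homogeneous networks: for a symmetric, nonnegative, row-stochastic flux
matrix `φ` and equal infection rates `β_j = β0`, the next generation matrix
is `κ = (β0/γ)·φ·φᵀ`; every eigenvalue `λ` of `κ` satisfies
`0 ≤ λ ≤ β0/γ`; `β0/γ` is an eigenvalue of `κ` with the all-ones vector as
eigenvector; and all eigenvalues of `κ` are `< 1` iff `β0 < γ`. -/
theorem homogeneous_ngm (M : ℕ) (hM : 0 < M)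
    (φ : Matrix (Fin M) (Fin M) ℝ)
    (hsym : φ.IsSymm) (hnn : ∀ i j, 0 ≤ φ i j)
    (hrow : ∀ i, ∑ j, φ i j = 1)
    (β0 γ : ℝ) (hβ0 : 0 < β0) (hγ : 0 < γ) :
    ngm M (fun _ => β0) γ φ = (β0 / γ) • (φ * φᵀ) ∧
    (∀ μ ∈ spectrum ℝ (ngm M (fun _ => β0) γ φ), 0 ≤ μ ∧ μ ≤ β0 / γ) ∧
    (ngm M (fun _ => β0) γ φ) *ᵥ (fun _ => 1) = (β0 / γ) • (fun _ => (1 : ℝ)) ∧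
    β0 / γ ∈ spectrum ℝ (ngm M (fun _ => β0) γ φ) ∧
    ((∀ μ ∈ spectrum ℝ (ngm M (fun _ => β0) γ φ), μ < 1) ↔ β0 < γ) := by
  set κ := ngm M (fun _ => β0) γ φ with hκ
  have hcol : ∀ j, ∑ k, φ k j = 1 := by
    intro j
    have : ∀ k, φ k j = φ j k := fun k => by
      conv_lhs => rw [← hsym]
      rfl
    simp_rw [this]; exact hrow j
  -- κ entries
  have hent : ∀ i k, κ i k = (β0 / γ) * ∑ j, φ i j * φ k j := by
    intro i k
    simp only [hκ, ngm, Matrix.of_apply]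
    rw [Finset.mul_sum, Finset.mul_sum]
    congr 1; ext j; ring
  have heq : κ = (β0 / γ) • (φ * φᵀ) := by
    ext i k
    rw [hent]
    simp [Matrix.mul_apply, Matrix.transpose_apply]
  -- nonneg entries
  have hknn : ∀ i k, 0 ≤ κ i k := fun i k => by
    rw [hent]
    exact mul_nonneg (le_of_lt (div_pos hβ0 hγ))
      (Finset.sum_nonneg fun j _ => mul_nonneg (hnn i j) (hnn k j))
  -- row sums
  have hrsum : ∀ i, ∑ k, κ i k = β0 / γ := by
    intro i
    simp_rw [hent]
    rw [← Finset.mul_sum, Finset.sum_comm]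
    have : ∀ j : Fin M, ∑ k, φ i j * φ k j = φ i j := by
      intro j; rw [← Finset.mul_sum, hcol j, mul_one]
    simp_rw [this, hrow i, mul_one]
  -- ones eigenvector
  have hones : κ *ᵥ (fun _ => 1) = (β0 / γ) • (fun _ => (1 : ℝ)) := by
    ext i
    simp [Matrix.mulVec, dotProduct, hrsum i]
  -- bounds on eigenvalues
  have hbd : ∀ μ ∈ spectrum ℝ κ, 0 ≤ μ ∧ μ ≤ β0 / γ := by
    intro μ hμ
    rw [matrix_mem_spectrum_iff] at hμ
    obtain ⟨v, hv, hev⟩ := hμ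
    constructor
    · -- PSD argument
      have key : v ⬝ᵥ (κ *ᵥ v) = (β0 / γ) * ((φᵀ *ᵥ v) ⬝ᵥ (φᵀ *ᵥ v)) := by
        rw [heq, Matrix.smul_mulVec, dotProduct_smul, smul_eq_mul]
        congr 1
        rw [← Matrix.mulVec_mulVec, Matrix.dotProduct_mulVec]
        congr 1
        ext j
        simp [Matrix.vecMul, Matrix.mulVec, dotProduct, Matrix.transpose_apply, mul_comm]
      have h1 : v ⬝ᵥ (κ *ᵥ v) = μ * (v ⬝ᵥ v) := by
        rw [hev, dotProduct_smul, smul_eq_mul]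
      have h2 : 0 ≤ (φᵀ *ᵥ v) ⬝ᵥ (φᵀ *ᵥ v) :=
        Finset.sum_nonneg fun i _ => mul_self_nonneg _
      have h3 : 0 < v ⬝ᵥ v := by
        rcases Function.ne_iff.mp hv with ⟨i, hi⟩
        have : (0:ℝ) < v i * v i := by
          have := mul_self_pos.mpr (by simpa using hi)
          simpa using this
        refine Finset.sum_pos' (fun k _ => mul_self_nonneg _) ⟨i, Finset.mem_univ i, this⟩
      have : 0 ≤ μ * (v ⬝ᵥ v) := by
        rw [← h1, key]; exact mul_nonneg (le_of_lt (div_pos hβ0 hγ)) h2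
      exact nonneg_of_mul_nonneg_right (by rwa [mul_comm] at this) h3
    · -- infinity norm argument
      obtain ⟨i, _, hi⟩ := Finset.exists_max_image Finset.univ (fun k => |v k|)
        (Finset.univ_nonempty_iff.mpr ⟨⟨0, hM⟩⟩ |>.ne_empty |> fun h => Finset.nonempty_iff_ne_empty.mpr h)
      have hvi : 0 < |v i| := by
        rcases Function.ne_iff.mp hv with ⟨k, hk⟩
        have : 0 < |v k| := abs_pos.mpr (by simpa using hk)
        exact lt_of_lt_of_le this (hi k (Finset.mem_univ k))
      have hmv : μ * v i = ∑ k, κ i k * v k := by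
        have := congrFun hev i
        simpa [Matrix.mulVec, dotProduct, mul_comm] using this.symm
      have habs : |μ| * |v i| ≤ (β0 / γ) * |v i| := by
        calc |μ| * |v i| = |μ * v i| := (abs_mul μ (v i)).symm
          _ = |∑ k, κ i k * v k| := by rw [hmv]
          _ ≤ ∑ k, |κ i k * v k| := Finset.abs_sum_le_sum_abs _ _
          _ ≤ ∑ k, κ i k * |v i| := by
              refine Finset.sum_le_sum fun k _ => ?_
              rw [abs_mul, abs_of_nonneg (hknn i k)]
              exact mul_le_mul_of_nonneg_left (hi k (Finset.mem_univ k)) (hknn i k)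
          _ = (β0 / γ) * |v i| := by rw [← Finset.sum_mul, hrsum i]
      have := le_of_mul_le_mul_right habs hvi
      exact le_trans (le_abs_self μ) this
  -- spectrum membership
  have hmem : β0 / γ ∈ spectrum ℝ κ := by
    rw [matrix_mem_spectrum_iff]
    refine ⟨fun _ => 1, ?_, hones⟩
    intro h
    have := congrFun h ⟨0, hM⟩
    simp at this
  refine ⟨heq, hbd, hones, hmem, ?_⟩
  constructor
  · intro h
    have := h _ hmem
    rwa [div_lt_one hγ] at this
  · intro h μ hμ
    exact lt_of_le_of_lt (hbd μ hμ).2 ((div_lt_one hγ).mpr h)
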